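/- Let $p \in \mathbb{R}[x_1,\dots,x_n]$ be a polynomial and let $g(x,y_1,y_2) = p(x)^2 + y_1^2 + y_2^3$. Then the real zero set $Y = Z(g) \subset \mathbb{R}^{n+2}$ is homeomorphic to $\mathbb{R}^{n+1}$; explicitly, the map $\mathbb{R}^{n+1} \to Y$ sending $(x, y_1)$ to $(x, y_1, (-p(x)^2 - y_1^2)^{1/3})$ is a homeomorphism onto $Y$. -/
import Mathlib


/-- The real cube root function `t ↦ t^(1/3)`. -/
noncomputable def realCbrt (t : ℝ) : ℝ :=
  if 0 ≤ t then t ^ ((1 : ℝ) / 3) else -((-t) ^ ((1 : ℝ) / 3))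

lemma realCbrt_cube (y : ℝ) : realCbrt (y ^ 3) = y := by
  unfold realCbrt
  rcases le_or_gt 0 y with hy | hy
  · rw [if_pos (by positivity)]
    rw [← Real.rpow_natCast y 3, ← Real.rpow_mul hy]
    norm_num
  · have hneg : y ^ 3 < 0 := by nlinarith [mul_pos (mul_pos (neg_pos.mpr hy) (neg_pos.mpr hy)) (neg_pos.mpr hy)]
    rw [if_neg (not_le.mpr hneg)]
    have h1 : -(y ^ 3) = (-y) ^ 3 := by ring
    rw [h1, ← Real.rpow_natCast (-y) 3, ← Real.rpow_mul (by linarith)]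
    norm_num

lemma cube_realCbrt (t : ℝ) : (realCbrt t) ^ 3 = t := by
  unfold realCbrt
  rcases le_or_gt 0 t with h | h
  · rw [if_pos h, ← Real.rpow_natCast (t ^ ((1:ℝ)/3)) 3, ← Real.rpow_mul h]
    norm_num
  · rw [if_neg (not_le.mpr h)]
    have : ((-t) ^ ((1:ℝ)/3)) ^ (3:ℕ) = -t := by
      rw [← Real.rpow_natCast ((-t) ^ ((1:ℝ)/3)) 3, ← Real.rpow_mul (by linarith)]
      norm_num
    nlinarith [this]

lemma continuous_realCbrt : Continuous realCbrt := by
  unfold realCbrt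
  apply Continuous.if
  · intro a ha
    have : a = 0 := by
      have := frontier_le_subset_eq (continuous_const) (continuous_id) ha
      simpa using this.symm
    simp [this]
  · exact Real.continuous_rpow_const (by norm_num)
  · exact ((Real.continuous_rpow_const (by norm_num)).comp continuous_neg).neg

/-- For a real polynomial `p` in `n` variables and
`g(x, y₁, y₂) = p(x)² + y₁² + y₂³`, the real zero set `Y = Z(g) ⊆ ℝ^{n+2}` is homeomorphic
to `ℝ^{n+1}`, via the map `(x, y₁) ↦ (x, y₁, (-p(x)² - y₁²)^{1/3})`. -/
theorem smoothing_Y_homeomorph (n : ℕ) (p : MvPolynomial (Fin n) ℝ) :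
    ∃ h : ((Fin n → ℝ) × ℝ) ≃ₜ
        {z : (Fin n → ℝ) × ℝ × ℝ //
          (MvPolynomial.eval z.1 p) ^ 2 + z.2.1 ^ 2 + z.2.2 ^ 3 = 0},
      ∀ xy : (Fin n → ℝ) × ℝ,
        (h xy : (Fin n → ℝ) × ℝ × ℝ) =
          (xy.1, xy.2, realCbrt (-(MvPolynomial.eval xy.1 p) ^ 2 - xy.2 ^ 2)) := by
  refine ⟨{
    toFun := fun xy => ⟨(xy.1, xy.2, realCbrt (-(MvPolynomial.eval xy.1 p) ^ 2 - xy.2 ^ 2)),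
      (by simp only []; rw [cube_realCbrt]; ring)⟩
    invFun := fun z => (z.1.1, z.1.2.1)
    left_inv := fun xy => rfl
    right_inv := ?_
    continuous_toFun := ?_
    continuous_invFun := ?_ }, fun xy => rfl⟩
  · rintro ⟨⟨x, y1, y2⟩, hz⟩
    simp only at hz ⊢
    ext <;> simp only []
    have : -(MvPolynomial.eval x p) ^ 2 - y1 ^ 2 = y2 ^ 3 := by linarith
    rw [this, realCbrt_cube]
  · apply Continuous.subtype_mk
    refine continuous_fst.prodMk (continuous_snd.prodMk ?_)
    exact continuous_realCbrt.comp
      ((((MvPolynomial.continuous_eval p).comp continuous_fst).pow 2).neg.sub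
        (continuous_snd.pow 2))
  · exact (continuous_subtype_val.fst).prodMk (continuous_subtype_val.snd.fst)
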